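/- Let (X,f) be a topological dynamical system and A ⊆ X a closed set. Then the following are equivalent: (1) A is a quasi-section; (2) the closure of O(x) meets A for every x ∈ X; (3) ω(x) ∩ A ≠ ∅ for every x ∈ X; (4) α(x) ∩ A ≠ ∅ for every x ∈ X; (5) A ∩ M ≠ ∅ for every minimal set M. -/

import Mathlib

open Set

/-- The full orbit `{fⁿ(x) : n ∈ ℤ}` of a point under a homeomorphism. -/
def orbitZ {X : Type*} [TopologicalSpace X] (f : X ≃ₜ X) (x : X) : Set X :=
  {y | ∃ n : ℤ, (f.toEquiv ^ n) x = y}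

/-- `O(A) = ⋃_{n ∈ ℤ} fⁿ(A)`. -/
def orbitSetZ {X : Type*} [TopologicalSpace X] (f : X ≃ₜ X) (A : Set X) : Set X :=
  ⋃ n : ℤ, (f.toEquiv ^ n) '' A

/-- `O⁺(A) = ⋃_{n ≥ 0} fⁿ(A)`. -/
def orbitSetP {X : Type*} [TopologicalSpace X] (f : X ≃ₜ X) (A : Set X) : Set X :=
  ⋃ n : ℕ, (f.toEquiv ^ (n : ℤ)) '' A

/-- `O⁻(A) = ⋃_{n ≤ 0} fⁿ(A)`. -/
def orbitSetN {X : Type*} [TopologicalSpace X] (f : X ≃ₜ X) (A : Set X) : Set X :=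
  ⋃ n : ℕ, (f.toEquiv ^ (-(n : ℤ))) '' A

/-- The ω-limit set of a point. -/
def omegaSet {X : Type*} [TopologicalSpace X] (f : X ≃ₜ X) (x : X) : Set X :=
  ⋂ n : ℕ, closure {y | ∃ m : ℕ, n ≤ m ∧ (f.toEquiv ^ (m : ℤ)) x = y}

/-- The α-limit set of a point. -/
def alphaSet {X : Type*} [TopologicalSpace X] (f : X ≃ₜ X) (x : X) : Set X :=
  ⋂ n : ℕ, closure {y | ∃ m : ℕ, n ≤ m ∧ (f.toEquiv ^ (-(m : ℤ))) x = y}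

/-- A minimal set: nonempty, closed, invariant, and every orbit in it is dense in it. -/
def IsMinimalSet {X : Type*} [TopologicalSpace X] (f : X ≃ₜ X) (M : Set X) : Prop :=
  M.Nonempty ∧ IsClosed M ∧ f '' M = M ∧ ∀ x ∈ M, M ⊆ closure (orbitZ f x)

/-- `M_f`: the closure of the union of all minimal sets. -/
def minimalUnion {X : Type*} [TopologicalSpace X] (f : X ≃ₜ X) : Set X :=
  closure (⋃₀ {M | IsMinimalSet f M})

/-- A wandering point. -/
def IsWandering {X : Type*} [TopologicalSpace X] (f : X ≃ₜ X) (x : X) : Prop :=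
  ∃ U : Set X, IsOpen U ∧ x ∈ U ∧ ∀ n : ℤ, n ≠ 0 → (f.toEquiv ^ n) '' U ∩ U = ∅

/-- `Ω_f`: the set of non-wandering points. -/
def nonWandering {X : Type*} [TopologicalSpace X] (f : X ≃ₜ X) : Set X :=
  {x | ¬ IsWandering f x}

/-- A quasi-section: a closed set every open neighborhood of which has full orbit. -/
def IsQuasiSection {X : Type*} [TopologicalSpace X] (f : X ≃ₜ X) (A : Set X) : Prop :=
  IsClosed A ∧ ∀ U : Set X, IsOpen U → A ⊆ U → orbitSetZ f U = Set.univ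

/-- A minimal quasi-section (minimal w.r.t. inclusion among quasi-sections). -/
def IsMinimalQuasiSection {X : Type*} [TopologicalSpace X] (f : X ≃ₜ X) (A : Set X) : Prop :=
  IsQuasiSection f A ∧ ∀ B : Set X, IsQuasiSection f B → B ⊆ A → B = A

/-- A basic set: a quasi-section meeting every orbit in at most one point. -/
def IsBasicSet {X : Type*} [TopologicalSpace X] (f : X ≃ₜ X) (A : Set X) : Prop :=
  IsQuasiSection f A ∧ ∀ x : X, (orbitZ f x ∩ A).Subsingleton

/-- A minimal basic set (minimal w.r.t. inclusion among basic sets). -/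
def IsMinimalBasicSet {X : Type*} [TopologicalSpace X] (f : X ≃ₜ X) (A : Set X) : Prop :=
  IsBasicSet f A ∧ ∀ B : Set X, IsBasicSet f B → B ⊆ A → B = A

/-- Densely aperiodic: the points with infinite orbit are dense. -/
def DenselyAperiodic {X : Type*} [TopologicalSpace X] (f : X ≃ₜ X) : Prop :=
  Dense {x : X | (orbitZ f x).Infinite}

section myaux
variable {X : Type*} [TopologicalSpace X]

lemma my_symm_pow (f : X ≃ₜ X) (n : ℤ) : f.symm.toEquiv ^ n = f.toEquiv ^ (-n) := by
  have h : f.symm.toEquiv = (f.toEquiv)⁻¹ := rfl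
  rw [h, inv_zpow, zpow_neg]

lemma my_apply_succ (f : X ≃ₜ X) (n : ℤ) (x : X) :
    (f.toEquiv ^ (n + 1)) x = f ((f.toEquiv ^ n) x) := by
  rw [add_comm, zpow_add, zpow_one, Equiv.Perm.mul_apply]
  rfl

lemma my_cancel (f : X ≃ₜ X) (n : ℤ) (x : X) :
    (f.toEquiv ^ (-n)) ((f.toEquiv ^ n) x) = x := by
  rw [← Equiv.Perm.mul_apply, ← zpow_add, neg_add_cancel, zpow_zero, Equiv.Perm.one_apply]

lemma my_orbit_symm (f : X ≃ₜ X) (x : X) : orbitZ f.symm x = orbitZ f x := by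
  ext y
  constructor
  · rintro ⟨n, rfl⟩; exact ⟨-n, by rw [my_symm_pow]⟩
  · rintro ⟨n, rfl⟩; exact ⟨-n, by rw [my_symm_pow, neg_neg]⟩

lemma my_symm_image (f : X ≃ₜ X) {M : Set X} (h : f '' M = M) : f.symm '' M = M := by
  conv_lhs => rw [← h]
  rw [← image_comp]
  simp

lemma my_zpow_image (f : X ≃ₜ X) {M : Set X} (h : f '' M = M) (n : ℤ) :
    (f.toEquiv ^ n) '' M = M := by
  induction n using Int.induction_on with
  | zero => simp
  | succ k ih =>
      rw [zpow_add_one, Equiv.Perm.coe_mul, image_comp]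
      rw [show (⇑f.toEquiv) '' M = f '' M from rfl, h, ih]
  | pred k ih =>
      rw [show (-(k:ℤ) - 1) = (-(k:ℤ)) + (-1) from by ring, zpow_add, Equiv.Perm.coe_mul,
        image_comp, zpow_neg_one]
      rw [show (⇑(f.toEquiv)⁻¹) '' M = f.symm '' M from rfl, my_symm_image f h, ih]

lemma my_zpow_mem (f : X ≃ₜ X) {M : Set X} (h : f '' M = M) {x : X} (hx : x ∈ M) (n : ℤ) :
    (f.toEquiv ^ n) x ∈ M := by
  rw [← my_zpow_image f h n]; exact ⟨x, hx, rfl⟩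

lemma my_orbit_inv (f : X ≃ₜ X) (x : X) : f '' orbitZ f x = orbitZ f x := by
  ext y
  constructor
  · rintro ⟨z, ⟨n, rfl⟩, rfl⟩; exact ⟨n + 1, my_apply_succ f n x⟩
  · rintro ⟨n, rfl⟩
    exact ⟨(f.toEquiv ^ (n - 1)) x, ⟨n - 1, rfl⟩, by rw [← my_apply_succ, sub_add_cancel]⟩

lemma my_orbit_subset (f : X ≃ₜ X) {M : Set X} (h : f '' M = M) {x : X} (hx : x ∈ M) :
    orbitZ f x ⊆ M := by
  rintro y ⟨n, rfl⟩; exact my_zpow_mem f h hx n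

lemma my_exists_minimal [CompactSpace X] [T2Space X] (f : X ≃ₜ X) (S : Set X)
    (hne : S.Nonempty) (hcl : IsClosed S) (hinv : f '' S = S) :
    ∃ M, M ⊆ S ∧ IsMinimalSet f M := by
  set T : Set (Set X) := {M | M ⊆ S ∧ M.Nonempty ∧ IsClosed M ∧ f '' M = M} with hT
  have hzorn : ∀ c ⊆ T, IsChain (· ⊆ ·) c → c.Nonempty → ∃ lb ∈ T, ∀ s ∈ c, lb ⊆ s := by
    intro c hcT hchain hcne
    haveI : Nonempty c := hcne.to_subtype
    refine ⟨⋂₀ c, ⟨?_, ?_, ?_, ?_⟩, fun s hs => sInter_subset_of_mem hs⟩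
    · obtain ⟨M₀, hM₀⟩ := hcne
      exact (sInter_subset_of_mem hM₀).trans (hcT hM₀).1
    · have hdir : DirectedOn (· ⊇ ·) c := by
        intro a ha b hb
        rcases eq_or_ne a b with rfl | hab
        · exact ⟨a, ha, subset_rfl, subset_rfl⟩
        · rcases hchain ha hb hab with h | h
          · exact ⟨a, ha, subset_rfl, h⟩
          · exact ⟨b, hb, h, subset_rfl⟩
      refine IsCompact.nonempty_sInter_of_directed_nonempty_isCompact_isClosed
        hdir (fun M hM => (hcT hM).2.1)
        (fun M hM => (hcT hM).2.2.1.isCompact) (fun M hM => (hcT hM).2.2.1)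
    · exact isClosed_sInter fun M hM => (hcT hM).2.2.1
    · rw [sInter_eq_iInter, image_iInter f.bijective]
      exact iInter_congr fun M => (hcT M.2).2.2.2
  obtain ⟨M, hMS, hMmin⟩ := zorn_superset_nonempty T hzorn S ⟨subset_rfl, hne, hcl, hinv⟩
  · obtain ⟨hMsub, hMne, hMcl, hMinv⟩ := hMmin.prop
    refine ⟨M, hMS, hMne, hMcl, hMinv, fun x hx => ?_⟩
    have horb : orbitZ f x ⊆ M := my_orbit_subset f hMinv hx
    have hN : closure (orbitZ f x) ∈ T := by
      refine ⟨(closure_minimal horb hMcl).trans hMsub, ⟨x, subset_closure ⟨0, rfl⟩⟩,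
        isClosed_closure, ?_⟩
      rw [f.image_closure, my_orbit_inv]
    exact hMmin.2 hN (closure_minimal horb hMcl)

lemma my_tail_antitone (f : X ≃ₜ X) (x : X) {n k : ℕ} (h : n ≤ k) :
    {y | ∃ m : ℕ, k ≤ m ∧ (f.toEquiv ^ (m : ℤ)) x = y} ⊆
      {y | ∃ m : ℕ, n ≤ m ∧ (f.toEquiv ^ (m : ℤ)) x = y} := by
  rintro y ⟨m, hm, rfl⟩; exact ⟨m, h.trans hm, rfl⟩

lemma my_omega_closed (f : X ≃ₜ X) (x : X) : IsClosed (omegaSet f x) :=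
  isClosed_iInter fun _ => isClosed_closure

lemma my_omega_nonempty [CompactSpace X] (f : X ≃ₜ X) (x : X) : (omegaSet f x).Nonempty := by
  apply IsCompact.nonempty_iInter_of_sequence_nonempty_isCompact_isClosed
  · exact fun n => closure_mono (my_tail_antitone f x (Nat.le_succ n))
  · exact fun n => ⟨(f.toEquiv ^ (n : ℤ)) x, subset_closure ⟨n, le_refl n, rfl⟩⟩
  · exact isClosed_closure.isCompact
  · exact fun n => isClosed_closure

lemma my_tail_image (f : X ≃ₜ X) (x : X) (n : ℕ) :
    f '' {y | ∃ m : ℕ, n ≤ m ∧ (f.toEquiv ^ (m : ℤ)) x = y} =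
      {y | ∃ m : ℕ, n + 1 ≤ m ∧ (f.toEquiv ^ (m : ℤ)) x = y} := by
  ext y
  constructor
  · rintro ⟨z, ⟨m, hm, rfl⟩, rfl⟩
    exact ⟨m + 1, by omega, by rw [Nat.cast_add, Nat.cast_one, my_apply_succ]⟩
  · rintro ⟨m, hm, rfl⟩
    obtain ⟨k, rfl⟩ : ∃ k, m = k + 1 := ⟨m - 1, by omega⟩
    exact ⟨(f.toEquiv ^ (k : ℤ)) x, ⟨k, by omega, rfl⟩,
      by rw [Nat.cast_add, Nat.cast_one, my_apply_succ]⟩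

lemma my_omega_inv (f : X ≃ₜ X) (x : X) : f '' omegaSet f x = omegaSet f x := by
  unfold omegaSet
  rw [image_iInter f.bijective]
  have h : ∀ n : ℕ, f '' closure {y | ∃ m : ℕ, n ≤ m ∧ (f.toEquiv ^ (m : ℤ)) x = y} =
      closure {y | ∃ m : ℕ, n + 1 ≤ m ∧ (f.toEquiv ^ (m : ℤ)) x = y} := fun n => by
    rw [f.image_closure, my_tail_image]
  simp only [h]
  apply subset_antisymm
  · intro y hy
    simp only [mem_iInter] at hy ⊢
    exact fun n => closure_mono (my_tail_antitone f x (Nat.le_succ n)) (hy n)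
  · intro y hy
    simp only [mem_iInter] at hy ⊢
    exact fun n => hy (n + 1)

lemma my_omega_subset (f : X ≃ₜ X) (x : X) : omegaSet f x ⊆ closure (orbitZ f x) := by
  refine (iInter_subset _ 0).trans (closure_mono ?_)
  rintro y ⟨m, _, rfl⟩; exact ⟨(m : ℤ), rfl⟩

lemma my_alpha_eq (f : X ≃ₜ X) (x : X) : alphaSet f x = omegaSet f.symm x := by
  unfold alphaSet omegaSet
  simp only [my_symm_pow]

lemma my_minimal_symm (f : X ≃ₜ X) (M : Set X) :
    IsMinimalSet f.symm M ↔ IsMinimalSet f M := by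
  have key : ∀ g : X ≃ₜ X, IsMinimalSet g M → IsMinimalSet g.symm M := by
    intro g ⟨hne, hcl, hinv, hdense⟩
    refine ⟨hne, hcl, my_symm_image g hinv, fun x hx => ?_⟩
    rw [my_orbit_symm]; exact hdense x hx
  constructor
  · intro h
    have := key f.symm h
    rwa [Homeomorph.symm_symm] at this
  · exact key f

lemma my_min_omega [CompactSpace X] [T2Space X] (f : X ≃ₜ X) (A : Set X)
    (h5 : ∀ M : Set X, IsMinimalSet f M → (A ∩ M).Nonempty) (x : X) :
    (omegaSet f x ∩ A).Nonempty := by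
  obtain ⟨M, hMS, hMmin⟩ := my_exists_minimal f (omegaSet f x) (my_omega_nonempty f x)
    (my_omega_closed f x) (my_omega_inv f x)
  obtain ⟨a, haA, haM⟩ := h5 M hMmin
  exact ⟨a, hMS haM, haA⟩

end myaux

theorem stmt2 {X : Type*} [TopologicalSpace X] [CompactSpace X] [T2Space X] [Nonempty X] (f : X ≃ₜ X)
    (A : Set X) (hA : IsClosed A) :
    List.TFAE [IsQuasiSection f A,
      ∀ x : X, (closure (orbitZ f x) ∩ A).Nonempty,
      ∀ x : X, (omegaSet f x ∩ A).Nonempty,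
      ∀ x : X, (alphaSet f x ∩ A).Nonempty,
      ∀ M : Set X, IsMinimalSet f M → (A ∩ M).Nonempty] := by
  tfae_have 1 → 5 := by
    rintro ⟨_, h1⟩ M hM
    by_contra hcon
    rw [not_nonempty_iff_eq_empty] at hcon
    obtain ⟨hMne, hMcl, hMinv, _⟩ := hM
    have hAU : A ⊆ Mᶜ := by
      intro a ha hm
      have h : a ∈ A ∩ M := ⟨ha, hm⟩
      rw [hcon] at h
      exact notMem_empty a h
    have huniv := h1 Mᶜ hMcl.isOpen_compl hAU
    have horb : orbitSetZ f Mᶜ = Mᶜ := by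
      unfold orbitSetZ
      have : ∀ n : ℤ, (f.toEquiv ^ n) '' Mᶜ = Mᶜ := fun n => by
        rw [Set.image_compl_eq (f.toEquiv ^ n).bijective, my_zpow_image f hMinv n]
      simp only [this, iUnion_const]
    obtain ⟨m, hm⟩ := hMne
    have : m ∈ orbitSetZ f Mᶜ := huniv ▸ mem_univ m
    rw [horb] at this
    exact this hm
  tfae_have 5 → 3 := fun h5 x => my_min_omega f A h5 x
  tfae_have 5 → 4 := by
    intro h5 x
    rw [my_alpha_eq]
    refine my_min_omega f.symm A (fun M hM => h5 M ((my_minimal_symm f M).mp hM)) x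
  tfae_have 3 → 2 := fun h3 x =>
    (h3 x).imp fun a ⟨hw, haA⟩ => ⟨my_omega_subset f x hw, haA⟩
  tfae_have 4 → 2 := by
    intro h4 x
    obtain ⟨a, hw, haA⟩ := h4 x
    rw [my_alpha_eq] at hw
    exact ⟨a, by rw [← my_orbit_symm]; exact my_omega_subset f.symm x hw, haA⟩
  tfae_have 2 → 1 := by
    intro h2
    refine ⟨hA, fun U hU hAU => ?_⟩
    rw [eq_univ_iff_forall]
    intro x
    obtain ⟨a, hacl, haA⟩ := h2 x
    obtain ⟨y, hyU, n, rfl⟩ := mem_closure_iff.mp hacl U hU (hAU haA)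
    exact mem_iUnion.mpr ⟨-n, ⟨_, hyU, my_cancel f n x⟩⟩
  tfae_finish
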